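/- arXiv:2202.03472 — 2 statements merged into one kernel-verified Lean document; each statement's English description precedes it below -/
import Mathlib

section
/- For every ε > 0 there exists N such that for all n ≥ N there exists a nonzero function f : F_2^n → ℝ supported in the Hamming ball B_4(0,n) of radius 4 with ⟨Af, f⟩ ≥ (√(5 + √10) − ε) · √n · ⟨f, f⟩; in particular λ_{B_4(0,n)} ≥ (√(5 + √10) − ε) √n, where √(5 + √10) ≈ 2.857. -/
open Finset

/-- The adjacency operator of the Hamming cube: `(Af)(x) = Σ_{y : d_H(x,y) = 1} f(y)`. -/
noncomputable def adjOp {n : ℕ} (f : (Fin n → ZMod 2) → ℝ) : (Fin n → ZMod 2) → ℝ :=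
  fun x => ∑ y : Fin n → ZMod 2, if hammingDist x y = 1 then f y else 0

/-- The inner product `⟨f, g⟩ = Σ_x f(x) g(x)`. -/
noncomputable def innerCube {n : ℕ} (f g : (Fin n → ZMod 2) → ℝ) : ℝ :=
  ∑ x : Fin n → ZMod 2, f x * g x

/-- The maximal eigenvalue of the subgraph of the Hamming cube induced by `B`. -/
noncomputable def maxEig {n : ℕ} (B : Finset (Fin n → ZMod 2)) : ℝ :=
  sSup {r : ℝ | ∃ f : (Fin n → ZMod 2) → ℝ, f ≠ 0 ∧ (∀ x, f x ≠ 0 → x ∈ B) ∧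
    r = innerCube (adjOp f) f / innerCube f f}

/-- The Hamming ball of radius `r` centered at `0` in `F_2^n`. -/
def hammingBall (n r : ℕ) : Finset (Fin n → ZMod 2) :=
  Finset.univ.filter (fun x => hammingNorm x ≤ r)


lemma zmod2_ne_iff {a b : ZMod 2} : a ≠ b ↔ a = b + 1 := by revert a b; decide

lemma zmod2_add_one_ne (a : ZMod 2) : a + 1 ≠ a := by revert a; decide

lemma zmod2_eq_one {a : ZMod 2} (h : a ≠ 0) : a = 1 := by revert h; revert a; decide

noncomputable section

variable {n : ℕ}

def flp (x : Fin n → ZMod 2) (i : Fin n) : Fin n → ZMod 2 := Function.update x i (x i + 1)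

lemma flp_self (x : Fin n → ZMod 2) (i : Fin n) : flp x i i = x i + 1 :=
  Function.update_self _ _ _

lemma flp_ne (x : Fin n → ZMod 2) {i j : Fin n} (h : j ≠ i) : flp x i j = x j :=
  Function.update_of_ne h _ _

lemma flp_flp (x : Fin n → ZMod 2) (i : Fin n) : flp (flp x i) i = x := by
  funext j
  by_cases h : j = i
  · subst h; rw [flp_self, flp_self]; generalize x j = a; revert a; decide
  · rw [flp_ne _ h, flp_ne _ h]

lemma dist_flp (x : Fin n → ZMod 2) (i : Fin n) : hammingDist x (flp x i) = 1 := by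
  show #(filter (fun j => x j ≠ flp x i j) univ) = 1
  have : (filter (fun j => x j ≠ flp x i j) univ) = {i} := by
    ext j
    simp only [mem_filter, mem_univ, true_and, mem_singleton]
    by_cases h : j = i
    · subst h; simp [flp_self, (zmod2_add_one_ne (x j)).symm]
    · simp [flp_ne _ h, h]
  rw [this, card_singleton]

lemma flp_inj (x : Fin n → ZMod 2) : Function.Injective (flp x) := by
  intro i j hij
  by_contra hne
  have h1 := congrFun hij i
  rw [flp_self, flp_ne x hne] at h1
  exact zmod2_add_one_ne (x i) h1

lemma adj_sum (x : Fin n → ZMod 2) (F : (Fin n → ZMod 2) → ℝ) :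
    (∑ y : Fin n → ZMod 2, if hammingDist x y = 1 then F y else 0) =
      ∑ i : Fin n, F (flp x i) := by
  rw [← Finset.sum_filter]
  have himg : filter (fun y => hammingDist x y = 1) univ = image (flp x) univ := by
    ext y
    simp only [mem_filter, mem_univ, true_and, mem_image]
    constructor
    · intro hy
      obtain ⟨i, hi⟩ := Finset.card_eq_one.mp hy
      refine ⟨i, ?_⟩
      symm
      have hmem : ∀ j, x j ≠ y j ↔ j = i := by
        intro j
        constructor
        · intro h
          have : j ∈ filter (fun j => x j ≠ y j) univ := by simp [h]
          rw [hi] at this; simpa using this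
        · intro h
          have hmemi : i ∈ filter (fun k => x k ≠ y k) univ := by
            rw [hi]; exact mem_singleton_self i
          rw [h]; exact (mem_filter.mp hmemi).2
      funext j
      by_cases h : j = i
      · subst h
        have hxy : x j ≠ y j := (hmem j).mpr rfl
        have : y j = x j + 1 := zmod2_ne_iff.mp (Ne.symm hxy)
        rw [flp_self, this]
      · have : ¬ (x j ≠ y j) := fun hc => h ((hmem j).mp hc)
        rw [flp_ne _ h, not_not.mp this]
    · rintro ⟨i, rfl⟩
      exact dist_flp x i
  rw [himg, Finset.sum_image (fun i _ j _ h => flp_inj x h)]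

lemma norm_flp_zero {x : Fin n → ZMod 2} {i : Fin n} (h : x i = 0) :
    hammingNorm (flp x i) = hammingNorm x + 1 := by
  show #(filter (fun j => flp x i j ≠ 0) univ) = #(filter (fun j => x j ≠ 0) univ) + 1
  have hset : filter (fun j => flp x i j ≠ 0) univ = insert i (filter (fun j => x j ≠ 0) univ) := by
    ext j
    simp only [mem_filter, mem_univ, true_and, mem_insert]
    by_cases hj : j = i
    · subst hj
      rw [flp_self, h]
      simp
    · rw [flp_ne _ hj]
      simp [hj]
  rw [hset, card_insert_of_notMem (by simp [h])]

lemma norm_flp_one {x : Fin n → ZMod 2} {i : Fin n} (h : x i ≠ 0) :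
    hammingNorm x = hammingNorm (flp x i) + 1 := by
  show #(filter (fun j => x j ≠ 0) univ) = #(filter (fun j => flp x i j ≠ 0) univ) + 1
  have hone : x i = 1 := zmod2_eq_one h
  have hset : filter (fun j => x j ≠ 0) univ = insert i (filter (fun j => flp x i j ≠ 0) univ) := by
    ext j
    simp only [mem_filter, mem_univ, true_and, mem_insert]
    by_cases hj : j = i
    · subst hj; simp [h]
    · rw [flp_ne _ hj]
      simp [hj]
  rw [hset, card_insert_of_notMem (by simp [flp_self, hone]; decide)]

lemma card_supp (x : Fin n → ZMod 2) :
    #(filter (fun i => x i ≠ 0) univ) = hammingNorm x := rfl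

lemma sum_radial (F : ℕ → ℝ) :
    ∑ x : Fin n → ZMod 2, F (hammingNorm x) =
      ∑ k ∈ range (n + 1), (n.choose k : ℝ) * F k := by
  have h1 : ∑ x : Fin n → ZMod 2, F (hammingNorm x) =
      ∑ s ∈ (univ : Finset (Fin n)).powerset, F #s := by
    refine Finset.sum_nbij' (i := fun x => filter (fun i => x i ≠ 0) univ)
      (j := fun s => fun i => if i ∈ s then 1 else 0) ?_ ?_ ?_ ?_ ?_
    · intro a _; exact mem_powerset.mpr (filter_subset _ _)
    · intro s _; exact mem_univ _
    · intro a _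
      funext i
      by_cases h : a i = 0 <;> simp [h, zmod2_eq_one]
    · intro s _
      ext i
      by_cases h : i ∈ s <;> simp [h]
    · intro a _; rfl
  rw [h1, Finset.sum_powerset]
  rw [card_univ, Fintype.card_fin]
  refine Finset.sum_congr rfl fun j hj => ?_
  rw [Finset.sum_congr rfl (fun t ht => by rw [(Finset.mem_powersetCard.mp ht).2]),
    Finset.sum_const, Finset.card_powersetCard, card_univ, Fintype.card_fin, nsmul_eq_mul]

lemma adj_radial (g : ℕ → ℝ) (x : Fin n → ZMod 2) :
    adjOp (fun y => g (hammingNorm y)) x =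
      ((n - hammingNorm x : ℕ) : ℝ) * g (hammingNorm x + 1)
        + (hammingNorm x : ℝ) * g (hammingNorm x - 1) := by
  rw [show adjOp (fun y => g (hammingNorm y)) x
      = ∑ y : Fin n → ZMod 2, if hammingDist x y = 1 then g (hammingNorm y) else 0 from rfl,
    adj_sum]
  rw [← Finset.sum_filter_add_sum_filter_not univ (fun i => x i ≠ 0)]
  have h1 : ∀ i ∈ filter (fun i => x i ≠ 0) univ,
      g (hammingNorm (flp x i)) = g (hammingNorm x - 1) := by
    intro i hi
    have := norm_flp_one (mem_filter.mp hi).2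
    have : hammingNorm (flp x i) = hammingNorm x - 1 := by omega
    rw [this]
  have h2 : ∀ i ∈ filter (fun i => ¬ x i ≠ 0) univ,
      g (hammingNorm (flp x i)) = g (hammingNorm x + 1) := by
    intro i hi
    rw [norm_flp_zero (not_not.mp (mem_filter.mp hi).2)]
  rw [Finset.sum_congr rfl h1, Finset.sum_congr rfl h2, Finset.sum_const, Finset.sum_const,
    card_supp, nsmul_eq_mul, nsmul_eq_mul]
  have hc : #(filter (fun i => ¬ x i ≠ 0) univ) = n - hammingNorm x := by
    have := Finset.card_filter_add_card_filter_not (s := (univ : Finset (Fin n)))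
      (p := fun i => x i ≠ 0)
    rw [card_supp, card_univ, Fintype.card_fin] at this
    omega
  rw [hc]
  ring

lemma flp_invol (i : Fin n) :
    Function.Involutive (fun x : Fin n → ZMod 2 => flp x i) :=
  fun x => flp_flp x i

lemma inner_self_eq (f : (Fin n → ZMod 2) → ℝ) :
    innerCube f f = ∑ x : Fin n → ZMod 2, f x ^ 2 :=
  Finset.sum_congr rfl fun x _ => (pow_two (f x)).symm

lemma inner_pos {f : (Fin n → ZMod 2) → ℝ} (hf : f ≠ 0) : 0 < innerCube f f := by
  obtain ⟨x, hx⟩ := Function.ne_iff.mp hf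
  exact Finset.sum_pos' (fun y _ => mul_self_nonneg _)
    ⟨x, mem_univ x, mul_self_pos.mpr hx⟩

lemma inner_adj_le (f : (Fin n → ZMod 2) → ℝ) :
    innerCube (adjOp f) f ≤ (n : ℝ) * innerCube f f := by
  have hrw : innerCube (adjOp f) f
      = ∑ x : Fin n → ZMod 2, ∑ i : Fin n, f (flp x i) * f x := by
    refine Finset.sum_congr rfl fun x _ => ?_
    rw [show adjOp f x = ∑ i : Fin n, f (flp x i) from adj_sum x f, Finset.sum_mul]
  have hkey : ∀ i : Fin n, (∑ x : Fin n → ZMod 2, f (flp x i) ^ 2)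
      = ∑ x : Fin n → ZMod 2, f x ^ 2 := fun i =>
    Fintype.sum_bijective _ (flp_invol i).bijective _ _ (fun x => rfl)
  have h2 : (2:ℝ) * innerCube (adjOp f) f ≤ 2 * ((n : ℝ) * innerCube f f) := by
    rw [hrw, Finset.mul_sum]
    calc ∑ x : Fin n → ZMod 2, 2 * ∑ i : Fin n, f (flp x i) * f x
        = ∑ x : Fin n → ZMod 2, ∑ i : Fin n, 2 * (f (flp x i) * f x) := by
          simp [Finset.mul_sum]
      _ ≤ ∑ x : Fin n → ZMod 2, ∑ i : Fin n, (f (flp x i) ^ 2 + f x ^ 2) := by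
          refine Finset.sum_le_sum fun x _ => Finset.sum_le_sum fun i _ => ?_
          nlinarith [sq_nonneg (f (flp x i) - f x)]
      _ = (∑ x : Fin n → ZMod 2, ∑ i : Fin n, f (flp x i) ^ 2)
            + ∑ x : Fin n → ZMod 2, ∑ i : Fin n, f x ^ 2 := by
          simp [Finset.sum_add_distrib]
      _ = 2 * ((n : ℝ) * innerCube f f) := by
          rw [Finset.sum_comm]
          simp only [hkey, Finset.sum_const, card_univ, Fintype.card_fin, nsmul_eq_mul,
            inner_self_eq, ← Finset.sum_mul, Finset.mul_sum]
          rw [← Finset.sum_add_distrib]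
          exact Finset.sum_congr rfl fun x _ => by ring
  linarith

lemma up_term (m k : ℕ) (hk : k < m) (u v : ℝ) :
    ((m - k : ℕ) : ℝ) * (m.choose k : ℝ) * (u / Real.sqrt (m.choose k))
        * (v / Real.sqrt (m.choose (k+1)))
      = u * v * (Real.sqrt (k+1) * Real.sqrt ((m:ℝ) - k)) := by
  have hA : (0:ℝ) < (m.choose k : ℝ) := by
    exact_mod_cast Nat.choose_pos hk.le
  have hB : (0:ℝ) < (m.choose (k+1) : ℝ) := by
    exact_mod_cast Nat.choose_pos hk
  have hc : ((m - k : ℕ) : ℝ) = (m : ℝ) - k := by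
    rw [Nat.cast_sub hk.le]
  have hc0 : (0:ℝ) ≤ (m : ℝ) - k := by
    rw [← hc]; positivity
  have hrel : ((k:ℝ) + 1) * (m.choose (k+1) : ℝ) = ((m:ℝ) - k) * (m.choose k : ℝ) := by
    have h := Nat.choose_succ_right_eq m k
    have h2 : ((m.choose (k+1) * (k+1) : ℕ) : ℝ) = ((m.choose k * (m - k) : ℕ) : ℝ) := by
      exact_mod_cast h
    push_cast at h2
    rw [Nat.cast_sub hk.le] at h2
    linarith
  have key : ((m:ℝ) - k) * (m.choose k : ℝ)
      = Real.sqrt (((k:ℝ)+1) * ((m:ℝ) - k)) * Real.sqrt ((m.choose k : ℝ) * (m.choose (k+1) : ℝ)) := by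
    rw [← Real.sqrt_mul (by positivity)]
    rw [show ((k:ℝ)+1) * ((m:ℝ)-k) * ((m.choose k : ℝ) * (m.choose (k+1) : ℝ))
        = (((m:ℝ)-k) * (m.choose k : ℝ)) * (((k:ℝ)+1) * (m.choose (k+1) : ℝ)) by ring, hrel]
    rw [show (((m:ℝ)-k) * (m.choose k:ℝ)) * (((m:ℝ)-k) * (m.choose k:ℝ))
        = (((m:ℝ)-k) * (m.choose k:ℝ))^2 by ring]
    exact (Real.sqrt_sq (by positivity)).symm
  have hsA : Real.sqrt (m.choose k : ℝ) ≠ 0 := ne_of_gt (Real.sqrt_pos.mpr hA)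
  have hsB : Real.sqrt (m.choose (k+1) : ℝ) ≠ 0 := ne_of_gt (Real.sqrt_pos.mpr hB)
  rw [hc]
  rw [Real.sqrt_mul (by positivity : (0:ℝ) ≤ ((k:ℝ)+1)) ((m:ℝ) - k)] at key
  rw [Real.sqrt_mul hA.le] at key
  field_simp
  calc ((m:ℝ) - k) * (m.choose k : ℝ) * u * v
      = u * v * (((m:ℝ) - k) * (m.choose k : ℝ)) := by ring
    _ = u * v * (Real.sqrt ((k:ℝ)+1) * Real.sqrt ((m:ℝ) - k)
          * (Real.sqrt (m.choose k : ℝ) * Real.sqrt (m.choose (k+1) : ℝ))) := by rw [key]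
    _ = u * v * (Real.sqrt ((k:ℝ)+1) * Real.sqrt ((m:ℝ) - k))
          * (Real.sqrt (m.choose k : ℝ) * Real.sqrt (m.choose (k+1) : ℝ)) := by ring
  ring

lemma quad_est {a k : ℝ} (h16 : 16 ≤ a) (hk0 : 0 ≤ k) (hk4 : k ≤ 4) :
    (a - 4)^2 ≤ (a - k) * a := by nlinarith

end

set_option maxHeartbeats 1000000 in
theorem eig_ball_four :
    ∀ ε : ℝ, 0 < ε → ∃ N : ℕ, ∀ n : ℕ, N ≤ n →
      (∃ f : (Fin n → ZMod 2) → ℝ, f ≠ 0 ∧ (∀ x, f x ≠ 0 → hammingNorm x ≤ 4) ∧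
        innerCube (adjOp f) f ≥ (Real.sqrt (5 + Real.sqrt 10) - ε) * Real.sqrt n * innerCube f f) ∧
      maxEig (hammingBall n 4) ≥ (Real.sqrt (5 + Real.sqrt 10) - ε) * Real.sqrt n := by
  intro ε hε
  refine ⟨max 16 ⌈(12:ℝ)/ε⌉₊, fun n hn => ?_⟩
  have hn16 : 16 ≤ n := le_trans (le_max_left _ _) hn
  have hn16R : (16:ℝ) ≤ (n:ℝ) := by exact_mod_cast hn16
  have hnε : (12:ℝ) ≤ ε * n := by
    have h1 : ((⌈(12:ℝ)/ε⌉₊ : ℕ) : ℝ) ≤ (n:ℝ) := by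
      exact_mod_cast le_trans (le_max_right _ _) hn
    have h2 : (12:ℝ)/ε ≤ (n:ℝ) := le_trans (Nat.le_ceil _) h1
    calc (12:ℝ) = ε * (12/ε) := by field_simp
      _ ≤ ε * n := mul_le_mul_of_nonneg_left h2 hε.le
  set s : ℝ := Real.sqrt 10 with hsdef
  have hs0 : 0 ≤ s := Real.sqrt_nonneg _
  have hs : s^2 = 10 := Real.sq_sqrt (by norm_num)
  set lam : ℝ := Real.sqrt (5 + s) with hlamdef
  have hlam0 : 0 < lam := Real.sqrt_pos.mpr (by linarith)
  have hlam : lam^2 = 5 + s := Real.sq_sqrt (by linarith)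
  have hs4 : s ≤ 4 := by nlinarith
  have hlam3 : lam ≤ 3 := by nlinarith
  have hr2 : (0:ℝ) < Real.sqrt 2 := Real.sqrt_pos.mpr (by norm_num)
  have hr3 : (0:ℝ) < Real.sqrt 3 := Real.sqrt_pos.mpr (by norm_num)
  have hr6 : (0:ℝ) < Real.sqrt 6 := Real.sqrt_pos.mpr (by norm_num)
  have hr24 : (0:ℝ) < Real.sqrt 24 := Real.sqrt_pos.mpr (by norm_num)
  have hr2sq : Real.sqrt 2 ^ 2 = 2 := Real.sq_sqrt (by norm_num)
  have hr6sq : Real.sqrt 6 ^ 2 = 6 := Real.sq_sqrt (by norm_num)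
  have hr24sq : Real.sqrt 24 ^ 2 = 24 := Real.sq_sqrt (by norm_num)
  have hsqrt4 : Real.sqrt 4 = 2 := by
    rw [show (4:ℝ) = 2^2 by norm_num, Real.sqrt_sq (by norm_num)]
  have h26 : Real.sqrt 2 * Real.sqrt 6 = 2 * Real.sqrt 3 := by
    rw [← Real.sqrt_mul (by norm_num)]
    rw [show (2:ℝ)*6 = 2^2*3 by norm_num, Real.sqrt_mul (by positivity), Real.sqrt_sq (by norm_num)]
  have h624 : Real.sqrt 6 * Real.sqrt 24 = 12 := by
    rw [← Real.sqrt_mul (by norm_num)]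
    rw [show (6:ℝ)*24 = 12^2 by norm_num, Real.sqrt_sq (by norm_num)]
  set b2 : ℝ := (4+s)/Real.sqrt 2 with hb2def
  set b3 : ℝ := lam*(2+s)/Real.sqrt 6 with hb3def
  set b4 : ℝ := (8+4*s)/Real.sqrt 24 with hb4def
  set bfun : ℕ → ℝ := (fun k => [(1:ℝ), lam, b2, b3, b4].getD k 0) with hbfun
  set g : ℕ → ℝ := (fun k => bfun k / Real.sqrt (n.choose k)) with hgdef
  set f : (Fin n → ZMod 2) → ℝ := (fun x => g (hammingNorm x)) with hfdef
  have hbv0 : bfun 0 = 1 := rfl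
  have hbv1 : bfun 1 = lam := rfl
  have hbv2 : bfun 2 = b2 := rfl
  have hbv3 : bfun 3 = b3 := rfl
  have hbv4 : bfun 4 = b4 := rfl
  have hb5 : bfun 5 = 0 := rfl
  have hbfun_ge : ∀ k, 4 < k → bfun k = 0 := by
    intro k hk
    simp only [hbfun]
    exact List.getD_eq_default _ _ (by simp; omega)
  have hg_ge : ∀ k, 4 < k → g k = 0 := fun k hk => by
    simp only [hgdef, hbfun_ge k hk, zero_div]
  have hb2p : 0 < b2 := div_pos (by linarith) hr2
  have hb3p : 0 < b3 := div_pos (by nlinarith) hr6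
  have hb4p : 0 < b4 := div_pos (by linarith) hr24
  -- the eigenvector identity
  have q2 : bfun 2 ^ 2 = (4+s)^2/2 := by rw [hbv2, hb2def, div_pow, hr2sq]
  have q3 : bfun 3 ^ 2 = (5+s)*(2+s)^2/6 := by
    rw [hbv3, hb3def, div_pow, hr6sq, mul_pow, hlam]
  have q4 : bfun 4 ^ 2 = (8+4*s)^2/24 := by rw [hbv4, hb4def, div_pow, hr24sq]
  have p1 : bfun 1 * bfun 2 * Real.sqrt 2 = lam * (4+s) := by
    rw [hbv1, hbv2, hb2def]
    field_simp
  have p2 : bfun 2 * bfun 3 * Real.sqrt 3 = lam*(4+s)*(2+s)/2 := by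
    rw [hbv2, hbv3, hb2def, hb3def, div_mul_div_comm, h26]
    rw [div_mul_eq_mul_div, eq_div_iff (by norm_num : (2:ℝ) ≠ 0)]
    have h3 : Real.sqrt 3 ≠ 0 := ne_of_gt hr3
    field_simp
  have p3 : bfun 3 * bfun 4 * Real.sqrt 4 = lam*(2+s)*(8+4*s)/6 := by
    rw [hsqrt4, hbv3, hbv4, hb3def, hb4def, div_mul_div_comm, h624]
    field_simp
    ring
  have hId : 2*(bfun 0*bfun 1*1 + bfun 1*bfun 2*Real.sqrt 2 + bfun 2*bfun 3*Real.sqrt 3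
        + bfun 3*bfun 4*Real.sqrt 4)
      = lam * (bfun 0^2 + bfun 1^2 + bfun 2^2 + bfun 3^2 + bfun 4^2) := by
    rw [p1, p2, p3, q2, q3, q4, hbv0, hbv1]
    linear_combination (-(lam*(s/6 + 1/3)))*hs + (-lam)*hlam
  have hchoose : ∀ k, k ≤ 4 → 0 < (n.choose k : ℝ) := fun k hk => by
    exact_mod_cast Nat.choose_pos (by omega)
  -- ⟨f, f⟩
  have hff0 : innerCube f f = ∑ k ∈ range (n+1), (n.choose k : ℝ) * (g k * g k) := by
    have hpt : ∀ x : Fin n → ZMod 2, f x * f x = (fun k => g k * g k) (hammingNorm x) := by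
      intro x; rw [hfdef]
    unfold innerCube
    exact (Finset.sum_congr rfl fun x _ => hpt x).trans (sum_radial (fun k => g k * g k))
  have hsq : ∀ k, k ≤ 4 → (n.choose k : ℝ) * (g k * g k) = bfun k ^ 2 := by
    intro k hk
    have hc := hchoose k hk
    have hcs : (0:ℝ) < Real.sqrt (n.choose k) := Real.sqrt_pos.mpr hc
    simp only [hgdef]
    rw [div_mul_div_comm, Real.mul_self_sqrt hc.le]
    field_simp
  have hT : innerCube f f = bfun 0^2 + bfun 1^2 + bfun 2^2 + bfun 3^2 + bfun 4^2 := by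
    rw [hff0, ← Finset.sum_subset (Finset.range_subset_range.mpr (show 5 ≤ n+1 by omega))
      (fun k _ hk2 => by
        rw [hg_ge k (by simp only [Finset.mem_range] at hk2; omega)]; ring)]
    rw [Finset.sum_range_succ, Finset.sum_range_succ, Finset.sum_range_succ,
      Finset.sum_range_succ, Finset.sum_range_one]
    rw [hsq 0 (by norm_num), hsq 1 (by norm_num), hsq 2 (by norm_num), hsq 3 (by norm_num),
      hsq 4 (by norm_num)]
  -- ⟨Af, f⟩
  have hAfrw : innerCube (adjOp f) f
      = ∑ k ∈ range (n+1), (n.choose k : ℝ)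
        * ((((n - k : ℕ) : ℝ) * g (k+1) + (k:ℝ) * g (k-1)) * g k) := by
    have hpt : ∀ x : Fin n → ZMod 2, adjOp f x * f x
        = (fun k => (((n - k : ℕ) : ℝ) * g (k+1) + (k:ℝ) * g (k-1)) * g k) (hammingNorm x) := by
      intro x
      rw [hfdef, adj_radial g x]
    unfold innerCube
    exact (Finset.sum_congr rfl fun x _ => hpt x).trans
      (sum_radial (fun k => (((n - k : ℕ) : ℝ) * g (k+1) + (k:ℝ) * g (k-1)) * g k))
  have hcr : ∀ k : ℕ, ((k:ℝ)+1) * (n.choose (k+1):ℝ) = ((n-k:ℕ):ℝ) * (n.choose k:ℝ) := by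
    intro k
    have h := congrArg (fun t : ℕ => (t:ℝ)) (Nat.choose_succ_right_eq n k)
    push_cast at h
    linarith
  have e0 := up_term n 0 (by omega) (bfun 0) (bfun 1)
  have e1 := up_term n 1 (by omega) (bfun 1) (bfun 2)
  have e2 := up_term n 2 (by omega) (bfun 2) (bfun 3)
  have e3 := up_term n 3 (by omega) (bfun 3) (bfun 4)
  have hcr0 := hcr 0
  have hcr1 := hcr 1
  have hcr2 := hcr 2
  have hcr3 := hcr 3
  norm_num at e0 e1 e2 e3 hcr0 hcr1 hcr2 hcr3
  have hE : innerCube (adjOp f) f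
      = 2 * (bfun 0 * bfun 1 * Real.sqrt (n:ℝ)
           + bfun 1 * bfun 2 * (Real.sqrt 2 * Real.sqrt ((n:ℝ)-1))
           + bfun 2 * bfun 3 * (Real.sqrt 3 * Real.sqrt ((n:ℝ)-2))
           + bfun 3 * bfun 4 * (Real.sqrt 4 * Real.sqrt ((n:ℝ)-3))) := by
    rw [hAfrw, ← Finset.sum_subset (Finset.range_subset_range.mpr (show 5 ≤ n+1 by omega))
      (fun k _ hk2 => by
        rw [hg_ge k (by simp only [Finset.mem_range] at hk2; omega)]; ring)]
    rw [Finset.sum_range_succ, Finset.sum_range_succ, Finset.sum_range_succ,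
      Finset.sum_range_succ, Finset.sum_range_one]
    simp only [hgdef]
    norm_num [hb5]
    linear_combination 2*e0 + 2*e1 + 2*e2 + 2*e3
      + (bfun 1/Real.sqrt (n:ℝ) * (bfun 2/Real.sqrt ((n.choose 2 : ℕ):ℝ)))*hcr1
      + (bfun 2/Real.sqrt ((n.choose 2 : ℕ):ℝ) * (bfun 3/Real.sqrt ((n.choose 3 : ℕ):ℝ)))*hcr2
      + (bfun 3/Real.sqrt ((n.choose 3 : ℕ):ℝ) * (bfun 4/Real.sqrt ((n.choose 4 : ℕ):ℝ)))*hcr3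
  -- nonvanishing and support
  have hg0 : g 0 = 1 := by
    simp only [hgdef]
    norm_num [hbv0]
  have hf0 : f ≠ 0 := by
    intro hzero
    have h1 : f 0 = 1 := by
      rw [hfdef]
      show g (hammingNorm (0 : Fin n → ZMod 2)) = 1
      rw [hammingNorm_zero, hg0]
    rw [hzero] at h1
    simp at h1
  have hsupp : ∀ x, f x ≠ 0 → hammingNorm x ≤ 4 := by
    intro x hx
    by_contra hgt
    apply hx
    rw [hfdef]
    show g (hammingNorm x) = 0
    exact hg_ge _ (by omega)
  -- the square-root estimates
  have hsn : (0:ℝ) < Real.sqrt (n:ℝ) := Real.sqrt_pos.mpr (by linarith)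
  have hsnsq : Real.sqrt (n:ℝ) * Real.sqrt (n:ℝ) = (n:ℝ) := Real.mul_self_sqrt (by linarith)
  set m : ℝ := Real.sqrt (n:ℝ) - 4 / Real.sqrt (n:ℝ) with hmdef
  have hmeq : m = ((n:ℝ) - 4) / Real.sqrt (n:ℝ) := by
    rw [hmdef, eq_div_iff (ne_of_gt hsn), sub_mul, hsnsq, div_mul_cancel₀ _ (ne_of_gt hsn)]
  have hm0 : 0 ≤ m := by
    rw [hmeq]
    apply div_nonneg _ hsn.le
    linarith
  have hmk : ∀ k : ℝ, 0 ≤ k → k ≤ 4 → m ≤ Real.sqrt ((n:ℝ) - k) := by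
    intro k hk0 hk4
    rw [Real.le_sqrt hm0 (by linarith)]
    rw [hmeq, div_pow, Real.sq_sqrt (by linarith : (0:ℝ) ≤ (n:ℝ))]
    rw [div_le_iff₀ (by linarith)]
    exact quad_est hn16R hk0 hk4
  have hmn : m ≤ Real.sqrt (n:ℝ) := by
    rw [hmdef]
    have h4 : 0 ≤ 4 / Real.sqrt (n:ℝ) := by positivity
    linarith
  have hbn0 : 0 ≤ bfun 0 := by rw [hbv0]; norm_num
  have hbn1 : 0 ≤ bfun 1 := by rw [hbv1]; exact hlam0.le
  have hbn2 : 0 ≤ bfun 2 := by rw [hbv2]; exact hb2p.le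
  have hbn3 : 0 ≤ bfun 3 := by rw [hbv3]; exact hb3p.le
  have hbn4 : 0 ≤ bfun 4 := by rw [hbv4]; exact hb4p.le
  have hstep : lam * (bfun 0^2 + bfun 1^2 + bfun 2^2 + bfun 3^2 + bfun 4^2) * m
      ≤ innerCube (adjOp f) f := by
    rw [hE, ← hId]
    have t0 : bfun 0 * bfun 1 * m ≤ bfun 0 * bfun 1 * Real.sqrt (n:ℝ) :=
      mul_le_mul_of_nonneg_left hmn (by positivity)
    have t1 : bfun 1 * bfun 2 * (Real.sqrt 2 * m)
        ≤ bfun 1 * bfun 2 * (Real.sqrt 2 * Real.sqrt ((n:ℝ)-1)) :=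
      mul_le_mul_of_nonneg_left
        (mul_le_mul_of_nonneg_left (hmk 1 (by norm_num) (by norm_num)) (Real.sqrt_nonneg 2))
        (by positivity)
    have t2 : bfun 2 * bfun 3 * (Real.sqrt 3 * m)
        ≤ bfun 2 * bfun 3 * (Real.sqrt 3 * Real.sqrt ((n:ℝ)-2)) :=
      mul_le_mul_of_nonneg_left
        (mul_le_mul_of_nonneg_left (hmk 2 (by norm_num) (by norm_num)) (Real.sqrt_nonneg 3))
        (by positivity)
    have t3 : bfun 3 * bfun 4 * (Real.sqrt 4 * m)
        ≤ bfun 3 * bfun 4 * (Real.sqrt 4 * Real.sqrt ((n:ℝ)-3)) :=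
      mul_le_mul_of_nonneg_left
        (mul_le_mul_of_nonneg_left (hmk 3 (by norm_num) (by norm_num)) (Real.sqrt_nonneg 4))
        (by positivity)
    linarith [t0, t1, t2, t3]
  have hTpos : 0 < bfun 0^2 + bfun 1^2 + bfun 2^2 + bfun 3^2 + bfun 4^2 := by
    rw [hbv0]
    positivity
  have hlm : (lam - ε) * Real.sqrt (n:ℝ) ≤ lam * m := by
    rw [hmeq, mul_div_assoc']
    rw [le_div_iff₀ hsn]
    have hx : (lam - ε) * Real.sqrt (n:ℝ) * Real.sqrt (n:ℝ) = (lam - ε) * (n:ℝ) := by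
      rw [mul_assoc, hsnsq]
    rw [hx]
    linarith [hnε, hlam3]
  have hfinal : (lam - ε) * Real.sqrt (n:ℝ) * innerCube f f ≤ innerCube (adjOp f) f := by
    rw [hT]
    calc (lam - ε) * Real.sqrt (n:ℝ) * (bfun 0^2 + bfun 1^2 + bfun 2^2 + bfun 3^2 + bfun 4^2)
        ≤ lam * m * (bfun 0^2 + bfun 1^2 + bfun 2^2 + bfun 3^2 + bfun 4^2) :=
          mul_le_mul_of_nonneg_right hlm hTpos.le
      _ = lam * (bfun 0^2 + bfun 1^2 + bfun 2^2 + bfun 3^2 + bfun 4^2) * m := by ring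
      _ ≤ _ := hstep
  refine ⟨⟨f, hf0, hsupp, hfinal⟩, ?_⟩
  have hbdd : BddAbove {r : ℝ | ∃ h : (Fin n → ZMod 2) → ℝ, h ≠ 0 ∧
      (∀ x, h x ≠ 0 → x ∈ hammingBall n 4) ∧ r = innerCube (adjOp h) h / innerCube h h} := by
    refine ⟨(n:ℝ), fun r hr => ?_⟩
    obtain ⟨h, hh0, -, rfl⟩ := hr
    rw [div_le_iff₀ (inner_pos hh0)]
    exact inner_adj_le h
  have hmem : innerCube (adjOp f) f / innerCube f f ∈ {r : ℝ | ∃ h : (Fin n → ZMod 2) → ℝ, h ≠ 0 ∧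
      (∀ x, h x ≠ 0 → x ∈ hammingBall n 4) ∧ r = innerCube (adjOp h) h / innerCube h h} :=
    ⟨f, hf0, fun x hx => by
      simp only [hammingBall, Finset.mem_filter, Finset.mem_univ, true_and]
      exact hsupp x hx, rfl⟩
  have hrq : (lam - ε) * Real.sqrt (n:ℝ) ≤ innerCube (adjOp f) f / innerCube f f := by
    rw [le_div_iff₀ (inner_pos hf0)]
    exact hfinal
  exact le_trans hrq (le_csSup hbdd hmem)
end

section
/- Fix any real constant t with 0 < t < √3/2 ≈ 0.866. Then there exist a constant K > 0 and an integer N such that for all n ≥ N, every binary (n, M, d) code with minimum distance d ≥ n/2 − t√n satisfies M ≤ K · n^{5/2}; in particular A(n, d) = O(n^{2.5}) whenever d ≥ n/2 − t√n. -/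
open Finset

noncomputable def Ee1 (_m s : ℝ) : ℝ := s
noncomputable def Ee2 (m s : ℝ) : ℝ := (s^2 - m)/2
noncomputable def Ee3 (m s : ℝ) : ℝ := (s^3 - (3*m-2)*s)/6
noncomputable def Ee4 (m s : ℝ) : ℝ := (s^4 - (6*m-8)*s^2 + 3*m^2 - 6*m)/24
noncomputable def Ee5 (m s : ℝ) : ℝ := (s^5 - (10*m-20)*s^3 + (15*m^2-50*m+24)*s)/120

section SymFun
variable {ι : Type*} [DecidableEq ι]

lemma sum_pcard_zero (A : Finset ι) (w : ι → ℝ) :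
    ∑ S ∈ A.powersetCard 0, ∏ i ∈ S, w i = 1 := by
  simp [Finset.powersetCard_zero]

lemma sum_pcard_insert {a : ι} {A : Finset ι} (ha : a ∉ A) (w : ι → ℝ) (k : ℕ) :
    ∑ S ∈ (insert a A).powersetCard (k+1), ∏ i ∈ S, w i
      = (∑ S ∈ A.powersetCard (k+1), ∏ i ∈ S, w i)
        + w a * ∑ S ∈ A.powersetCard k, ∏ i ∈ S, w i := by
  have hdisj : Disjoint (A.powersetCard (k+1)) ((A.powersetCard k).image (insert a)) := by
    rw [Finset.disjoint_left]
    intro S hS hS'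
    obtain ⟨T, hT, rfl⟩ := Finset.mem_image.mp hS'
    have hsub : insert a T ⊆ A := (Finset.mem_powersetCard.mp hS).1
    exact ha (hsub (Finset.mem_insert_self a T))
  rw [Finset.powersetCard_succ_insert ha, Finset.sum_union hdisj]
  congr 1
  rw [Finset.sum_image, Finset.mul_sum]
  · apply Finset.sum_congr rfl
    intro S hS
    have hsub : S ⊆ A := (Finset.mem_powersetCard.mp hS).1
    rw [Finset.prod_insert (fun h => ha (hsub h))]
  · intro S hS T hT hST
    have haS : a ∉ S := fun h => ha ((Finset.mem_powersetCard.mp hS).1 h)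
    have haT : a ∉ T := fun h => ha ((Finset.mem_powersetCard.mp hT).1 h)
    rw [← Finset.erase_insert haS, ← Finset.erase_insert haT, hST]

lemma master (w : ι → ℝ) (A : Finset ι) (hw : ∀ i ∈ A, w i = 1 ∨ w i = -1) :
    (∑ S ∈ A.powersetCard 1, ∏ i ∈ S, w i) = Ee1 A.card (∑ i ∈ A, w i) ∧
    (∑ S ∈ A.powersetCard 2, ∏ i ∈ S, w i) = Ee2 A.card (∑ i ∈ A, w i) ∧
    (∑ S ∈ A.powersetCard 3, ∏ i ∈ S, w i) = Ee3 A.card (∑ i ∈ A, w i) ∧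
    (∑ S ∈ A.powersetCard 4, ∏ i ∈ S, w i) = Ee4 A.card (∑ i ∈ A, w i) ∧
    (∑ S ∈ A.powersetCard 5, ∏ i ∈ S, w i) = Ee5 A.card (∑ i ∈ A, w i) := by
  classical
  induction A using Finset.induction_on with
  | empty =>
    have he : ∀ k : ℕ, 0 < k → (∅ : Finset ι).powersetCard k = ∅ := by
      intro k hk
      rw [Finset.powersetCard_eq_empty]
      simpa using hk
    rw [he 1 (by norm_num), he 2 (by norm_num), he 3 (by norm_num), he 4 (by norm_num),
      he 5 (by norm_num)]
    norm_num [Ee1, Ee2, Ee3, Ee4, Ee5]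
  | insert a A ha ih =>
    have hwA : ∀ i ∈ A, w i = 1 ∨ w i = -1 := fun i hi => hw i (Finset.mem_insert_of_mem hi)
    have ha1 : w a = 1 ∨ w a = -1 := hw a (Finset.mem_insert_self a A)
    obtain ⟨h1, h2, h3, h4, h5⟩ := ih hwA
    have h0 := sum_pcard_zero A w
    have hcard : (((insert a A).card : ℝ)) = (A.card : ℝ) + 1 := by
      rw [Finset.card_insert_of_notMem ha]; push_cast; ring
    have hsum : ∑ i ∈ insert a A, w i = w a + ∑ i ∈ A, w i := Finset.sum_insert ha
    refine ⟨?_, ?_, ?_, ?_, ?_⟩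
    · rw [show (1:ℕ) = 0+1 from rfl, sum_pcard_insert ha w 0, h0, hsum, hcard]
      rw [show (0:ℕ)+1 = 1 from rfl, h1]
      rcases ha1 with h | h <;> rw [h] <;> simp only [Ee1] <;> ring
    · rw [show (2:ℕ) = 1+1 from rfl, sum_pcard_insert ha w 1, h1, h2, hsum, hcard]
      rcases ha1 with h | h <;> rw [h] <;> simp only [Ee1, Ee2] <;> ring
    · rw [show (3:ℕ) = 2+1 from rfl, sum_pcard_insert ha w 2, h2, h3, hsum, hcard]
      rcases ha1 with h | h <;> rw [h] <;> simp only [Ee2, Ee3] <;> ring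
    · rw [show (4:ℕ) = 3+1 from rfl, sum_pcard_insert ha w 3, h3, h4, hsum, hcard]
      rcases ha1 with h | h <;> rw [h] <;> simp only [Ee3, Ee4] <;> ring
    · rw [show (5:ℕ) = 4+1 from rfl, sum_pcard_insert ha w 4, h4, h5, hsum, hcard]
      rcases ha1 with h | h <;> rw [h] <;> simp only [Ee4, Ee5] <;> ring

end SymFun

section Cube

variable {n : ℕ}

noncomputable def uu (x : Fin n → ZMod 2) (i : Fin n) : ℝ := if x i = 0 then 1 else -1

lemma zmod2_cases : ∀ a : ZMod 2, a = 0 ∨ a = 1 := by decide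

lemma uu_pm (x : Fin n → ZMod 2) (i : Fin n) : uu x i = 1 ∨ uu x i = -1 := by
  unfold uu; split <;> simp

lemma uu_mul (x y : Fin n → ZMod 2) (i : Fin n) :
    uu x i * uu y i = if x i = y i then 1 else -1 := by
  unfold uu
  rcases zmod2_cases (x i) with hx | hx <;> rcases zmod2_cases (y i) with hy | hy <;>
    rw [hx, hy] <;> norm_num

lemma sfun_eq_dist (x y : Fin n → ZMod 2) :
    ∑ i, uu x i * uu y i = (n : ℝ) - 2 * (hammingDist x y : ℝ) := by
  have hd : (hammingDist x y : ℝ) = ∑ i, if x i ≠ y i then (1:ℝ) else 0 := by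
    rw [hammingDist]
    exact Finset.natCast_card_filter _ _
  have : ∀ i, uu x i * uu y i = 1 - 2 * (if x i ≠ y i then (1:ℝ) else 0) := by
    intro i
    rw [uu_mul]
    by_cases h : x i = y i <;> simp [h] <;> ring
  rw [Finset.sum_congr rfl fun i _ => this i, hd]
  rw [Finset.sum_sub_distrib, ← Finset.mul_sum]
  simp

lemma sfun_self (x : Fin n → ZMod 2) : ∑ i, uu x i * uu x i = (n : ℝ) := by
  have : ∀ i, uu x i * uu x i = 1 := by
    intro i; rcases uu_pm x i with h | h <;> rw [h] <;> norm_num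
  rw [Finset.sum_congr rfl fun i _ => this i]
  simp

lemma F_nonneg (C : Finset (Fin n → ZMod 2)) (k : ℕ) (G : ℝ → ℝ)
    (hG : ∀ w : Fin n → ℝ, (∀ i, w i = 1 ∨ w i = -1) →
      ∑ S ∈ (Finset.univ : Finset (Fin n)).powersetCard k, ∏ i ∈ S, w i = G (∑ i, w i)) :
    0 ≤ ∑ x ∈ C, ∑ y ∈ C, G (∑ i, uu x i * uu y i) := by
  classical
  have h1 : ∀ x y : Fin n → ZMod 2, G (∑ i, uu x i * uu y i)
      = ∑ S ∈ (Finset.univ : Finset (Fin n)).powersetCard k,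
          (∏ i ∈ S, uu x i) * (∏ i ∈ S, uu y i) := by
    intro x y
    rw [← hG (fun i => uu x i * uu y i) (fun i => by
      rcases uu_pm x i with h | h <;> rcases uu_pm y i with h' | h' <;>
        rw [h, h'] <;> norm_num)]
    exact Finset.sum_congr rfl fun S _ => Finset.prod_mul_distrib
  have key : ∑ x ∈ C, ∑ y ∈ C, G (∑ i, uu x i * uu y i)
      = ∑ S ∈ (Finset.univ : Finset (Fin n)).powersetCard k,
          (∑ x ∈ C, ∏ i ∈ S, uu x i)^2 := by
    calc ∑ x ∈ C, ∑ y ∈ C, G (∑ i, uu x i * uu y i)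
        = ∑ x ∈ C, ∑ y ∈ C, ∑ S ∈ (Finset.univ : Finset (Fin n)).powersetCard k,
            (∏ i ∈ S, uu x i) * (∏ i ∈ S, uu y i) :=
          Finset.sum_congr rfl fun x _ => Finset.sum_congr rfl fun y _ => h1 x y
      _ = ∑ x ∈ C, ∑ S ∈ (Finset.univ : Finset (Fin n)).powersetCard k,
            ∑ y ∈ C, (∏ i ∈ S, uu x i) * (∏ i ∈ S, uu y i) :=
          Finset.sum_congr rfl fun x _ => Finset.sum_comm
      _ = ∑ S ∈ (Finset.univ : Finset (Fin n)).powersetCard k,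
            ∑ x ∈ C, ∑ y ∈ C, (∏ i ∈ S, uu x i) * (∏ i ∈ S, uu y i) := Finset.sum_comm
      _ = ∑ S ∈ (Finset.univ : Finset (Fin n)).powersetCard k,
            (∑ x ∈ C, ∏ i ∈ S, uu x i)^2 := by
          refine Finset.sum_congr rfl fun S _ => ?_
          rw [sq, Finset.sum_mul_sum]
  rw [key]
  exact Finset.sum_nonneg fun S _ => sq_nonneg _

end Cube

section Coeffs

lemma coeff_exp (τ δ v s : ℝ) (hδ : δ = 3-4*τ^2) :
    (s - 2*τ*v) * ((4*τ^2-1)*s^2 + 4*τ*v*s + (3-4*τ^2)*v^2)^2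
      = 4*τ*(2-δ)*(δ*v^2-2-δ)*v^3
        + ((2*δ^2-12*δ+24)*v^4 + (12*δ^2-40*δ+24)*v^2 - 30*(2-δ)^2*v^2 + 16*(2-δ)^2)
            * Ee1 (v^2) s
        + (4*τ*(-4*δ^2+4*δ+12)*v^3 - 32*τ*(4-δ^2)*v) * Ee2 (v^2) s
        + ((24*δ^2-120*δ+168)*v^2 - 120*(2-δ)^2) * Ee3 (v^2) s
        + (48*τ*(4-δ^2)*v) * Ee4 (v^2) s
        + (120*(2-δ)^2) * Ee5 (v^2) s := by
  subst hδ
  simp only [Ee1, Ee2, Ee3, Ee4, Ee5]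
  ring

variable {τ δ v : ℝ} (hτ1 : 3/5 ≤ τ) (hτ2 : τ ≤ 7/8) (hδ0 : 0 < δ) (hδ2 : δ ≤ 39/25)
  (hv20 : 20 ≤ v)

include hτ1 hτ2 hδ0 hδ2 hv20

lemma cA4 : 0 ≤ 48*τ*(4-δ^2)*v := by
  have h1 : (0:ℝ) ≤ 4-δ^2 := by nlinarith
  nlinarith [mul_nonneg (mul_nonneg (mul_nonneg (show (0:ℝ) ≤ 48 by norm_num)
    (show (0:ℝ) ≤ τ by linarith)) h1) (show (0:ℝ) ≤ v by linarith)]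

lemma cA3 : 0 ≤ (24*δ^2-120*δ+168)*v^2 - 120*(2-δ)^2 := by
  have h1 : (18:ℝ) ≤ 24*δ^2-120*δ+168 := by nlinarith [sq_nonneg (2*δ-5)]
  have h2 : (2-δ)^2 ≤ 4 := by nlinarith
  have hv400 : (400:ℝ) ≤ v^2 := by nlinarith
  nlinarith [mul_le_mul h1 hv400 (by norm_num) (by linarith)]

lemma cA2 : 0 ≤ 4*τ*(-4*δ^2+4*δ+12)*v^3 - 32*τ*(4-δ^2)*v := by
  have hτ0 : (0:ℝ) ≤ τ := by linarith
  have hv0 : (0:ℝ) ≤ v := by linarith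
  have h1 : (2:ℝ) ≤ -4*δ^2+4*δ+12 := by nlinarith
  have e1 : 2*v^3 ≤ (-4*δ^2+4*δ+12)*v^3 := mul_le_mul_of_nonneg_right h1 (by positivity)
  have e2 : 32*τ*(4-δ^2)*v ≤ 128*τ*v := by nlinarith [mul_nonneg hτ0 hv0]
  have e3 : 128*τ*v ≤ 8*τ*v^3 := by
    have h16 : (0:ℝ) ≤ v^2 - 16 := by nlinarith
    nlinarith [mul_nonneg (mul_nonneg hτ0 hv0) h16]
  nlinarith [mul_le_mul_of_nonneg_left e1 hτ0]

lemma cA1 : 0 ≤ (2*δ^2-12*δ+24)*v^4 + (12*δ^2-40*δ+24)*v^2 - 30*(2-δ)^2*v^2 + 16*(2-δ)^2 := by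
  have hv0 : (0:ℝ) ≤ v := by linarith
  have h1 : (5:ℝ) ≤ 2*δ^2-12*δ+24 := by nlinarith [sq_nonneg (δ-3)]
  have h2 : (-10:ℝ) ≤ 12*δ^2-40*δ+24 := by nlinarith [sq_nonneg (6*δ-10)]
  have h3 : (2-δ)^2 ≤ 4 := by nlinarith
  have e1 : 5*v^4 ≤ (2*δ^2-12*δ+24)*v^4 := mul_le_mul_of_nonneg_right h1 (by positivity)
  have e2 : (-10:ℝ)*v^2 ≤ (12*δ^2-40*δ+24)*v^2 := mul_le_mul_of_nonneg_right h2 (by positivity)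
  have e3 : 30*(2-δ)^2*v^2 ≤ 120*v^2 := by nlinarith [sq_nonneg v]
  have hv400 : (400:ℝ) ≤ v^2 := by nlinarith [sq_nonneg (v-20)]
  have e5 : 400*v^2 ≤ v^4 := by
    nlinarith [mul_nonneg (sq_nonneg v) (show (0:ℝ) ≤ v^2 - 400 by linarith)]
  nlinarith [sq_nonneg (2-δ)]

lemma cA0 (hδv : (8:ℝ) ≤ δ*v^2) : δ/4*v^5 ≤ 4*τ*(2-δ)*(δ*v^2-2-δ)*v^3 := by
  have hv0 : (0:ℝ) ≤ v := by linarith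
  have h1 : δ*v^2/2 ≤ δ*v^2 - 2 - δ := by linarith
  have h2 : (1:ℝ) ≤ 4*τ*(2-δ) := by
    nlinarith [mul_le_mul hτ1 (show (11:ℝ)/25 ≤ 2 - δ by linarith) (by norm_num)
      (by linarith : (0:ℝ) ≤ τ)]
  have h3 : (0:ℝ) ≤ δ*v^2/2 := by positivity
  have key : (δ*v^2/2) * v^3 ≤ (4*τ*(2-δ)) * (δ*v^2-2-δ) * v^3 := by
    apply mul_le_mul_of_nonneg_right _ (by positivity)
    nlinarith [mul_le_mul h2 h1 h3 (by linarith : (0:ℝ) ≤ 4*τ*(2-δ))]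
  nlinarith [key, pow_nonneg hv0 5]

lemma cFn (hτδ : 4*τ^2 < 3) :
    (v^2 - 2*τ*v) * ((4*τ^2-1)*(v^2)^2 + 4*τ*v*(v^2) + (3-4*τ^2)*v^2)^2 ≤ 16*v^10 := by
  have hτ0 : (0:ℝ) ≤ τ := by linarith
  have hv0 : (0:ℝ) ≤ v := by linarith
  have hτsq' : (11:ℝ)/25 ≤ 4*τ^2 - 1 := by nlinarith
  have hQ0 : 0 ≤ (4*τ^2-1)*(v^2)^2 + 4*τ*v*(v^2) + (3-4*τ^2)*v^2 := by
    nlinarith [mul_nonneg (show (0:ℝ) ≤ 4*τ^2-1 by linarith) (sq_nonneg (v^2)),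
      mul_nonneg (mul_nonneg hτ0 hv0) (sq_nonneg v),
      mul_nonneg (show (0:ℝ) ≤ 3-4*τ^2 by linarith) (sq_nonneg v)]
  have hQ : (4*τ^2-1)*(v^2)^2 + 4*τ*v*(v^2) + (3-4*τ^2)*v^2 ≤ 4*v^4 := by
    have e1 : (4*τ^2-1)*(v^2)^2 ≤ (33:ℝ)/16*v^4 := by
      nlinarith [mul_le_mul_of_nonneg_right (show 4*τ^2-1 ≤ (33:ℝ)/16 by nlinarith)
        (sq_nonneg (v^2))]
    have e2 : 4*τ*v*(v^2) ≤ 4*v^3 := by nlinarith [mul_nonneg hv0 (sq_nonneg v)]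
    have e3 : (3-4*τ^2)*v^2 ≤ 3*v^2 := by nlinarith [sq_nonneg v, mul_nonneg hτ0 (sq_nonneg v)]
    have e4 : 4*v^3 ≤ (1:ℝ)/5*v^4 := by nlinarith [mul_nonneg (mul_nonneg hv0 hv0) hv0]
    have e5 : 3*v^2 ≤ (1:ℝ)/100*v^4 := by nlinarith [sq_nonneg v, sq_nonneg (v^2 - 300)]
    linarith
  have hlin0 : 0 ≤ v^2 - 2*τ*v := by nlinarith
  have hlin : v^2 - 2*τ*v ≤ v^2 := by nlinarith [mul_nonneg hτ0 hv0]
  calc (v^2 - 2*τ*v) * ((4*τ^2-1)*(v^2)^2 + 4*τ*v*(v^2) + (3-4*τ^2)*v^2)^2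
      ≤ v^2 * (4*v^4)^2 := by
        apply mul_le_mul hlin (pow_le_pow_left₀ hQ0 hQ 2) (sq_nonneg _) (sq_nonneg v)
    _ = 16*v^10 := by ring

end Coeffs

set_option maxHeartbeats 2000000
/-- For any fixed `0 < t < √3/2`, codes with minimum distance `d ≥ n/2 - t√n`
have size `O(n^{5/2})`. -/
theorem upper_bound_t_sqrt_n_small (t : ℝ) (ht0 : 0 < t) (ht : t < Real.sqrt 3 / 2) :
    ∃ K : ℝ, 0 < K ∧ ∃ N : ℕ, ∀ n : ℕ, N ≤ n →
      ∀ d : ℕ, ∀ C : Finset (Fin n → ZMod 2),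
        (∀ x ∈ C, ∀ y ∈ C, x ≠ y → d ≤ hammingDist x y) →
        ((n : ℝ) / 2 - t * Real.sqrt n ≤ d) →
        (C.card : ℝ) ≤ K * (n : ℝ) ^ ((5 : ℝ) / 2) := by
  classical
  set τ : ℝ := max t (3/5) with hτdef
  have hτ1 : (3:ℝ)/5 ≤ τ := le_max_right _ _
  have hτt : t ≤ τ := le_max_left _ _
  have hs3 : Real.sqrt 3 < 7/4 := by
    nlinarith [Real.sq_sqrt (show (0:ℝ) ≤ 3 by norm_num), Real.sqrt_nonneg 3]
  have hτs : τ < Real.sqrt 3 / 2 := by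
    apply max_lt ht
    nlinarith [Real.sq_sqrt (show (0:ℝ) ≤ 3 by norm_num), Real.sqrt_nonneg 3]
  have hτ2 : τ ≤ 7/8 := by linarith
  have hτ0 : (0:ℝ) ≤ τ := by linarith
  have hτsq : 4*τ^2 < 3 := by
    nlinarith [Real.sq_sqrt (show (0:ℝ) ≤ 3 by norm_num), Real.sqrt_nonneg 3]
  clear_value τ
  set δ : ℝ := 3 - 4*τ^2 with hδdef
  have hδ0 : 0 < δ := by rw [hδdef]; linarith
  have hδ2 : δ ≤ 39/25 := by rw [hδdef]; nlinarith
  refine ⟨256/δ, by positivity, 400 + ⌈(8:ℝ)/δ⌉₊, fun n hn d C hC hd => ?_⟩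
  have hn400 : (400:ℝ) ≤ (n:ℝ) := by
    have h : (400:ℕ) ≤ n := le_trans (by omega) hn
    exact_mod_cast h
  have hceil : ((⌈(8:ℝ)/δ⌉₊ : ℝ)) ≤ (n:ℝ) := by
    have h : ⌈(8:ℝ)/δ⌉₊ ≤ n := le_trans (by omega) hn
    exact_mod_cast h
  have hδn : 8 ≤ δ * (n:ℝ) := by
    have h8 : (8:ℝ)/δ ≤ (n:ℝ) := le_trans (Nat.le_ceil _) hceil
    calc (8:ℝ) = δ * (8/δ) := by field_simp
    _ ≤ δ * n := mul_le_mul_of_nonneg_left h8 (le_of_lt hδ0)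
  set v : ℝ := Real.sqrt n with hvdef
  have hv0 : 0 ≤ v := Real.sqrt_nonneg _
  have hv2 : v^2 = (n:ℝ) := Real.sq_sqrt (Nat.cast_nonneg n)
  have hv20 : 20 ≤ v := by nlinarith
  have hvpos : 0 < v := by linarith
  clear_value v
  set a5 : ℝ := 120*(2-δ)^2 with ha5def
  set a4 : ℝ := 48*τ*(4-δ^2)*v with ha4def
  set a3 : ℝ := (24*δ^2-120*δ+168)*v^2 - 120*(2-δ)^2 with ha3def
  set a2 : ℝ := 4*τ*(-4*δ^2+4*δ+12)*v^3 - 32*τ*(4-δ^2)*v with ha2def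
  set a1 : ℝ := (2*δ^2-12*δ+24)*v^4 + (12*δ^2-40*δ+24)*v^2 - 30*(2-δ)^2*v^2 + 16*(2-δ)^2
    with ha1def
  set a0 : ℝ := 4*τ*(2-δ)*(δ*v^2-2-δ)*v^3 with ha0def
  set f : ℝ → ℝ := fun s => (s - 2*τ*v) * ((4*τ^2-1)*s^2 + 4*τ*v*s + (3-4*τ^2)*v^2)^2 with hfdef
  have hexp : ∀ s : ℝ, f s = a0 + a1 * Ee1 (v^2) s + a2 * Ee2 (v^2) s + a3 * Ee3 (v^2) s
      + a4 * Ee4 (v^2) s + a5 * Ee5 (v^2) s := by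
    intro s
    rw [hfdef, ha0def, ha1def, ha2def, ha3def, ha4def, ha5def]
    exact coeff_exp τ δ v s hδdef
  clear_value a0 a1 a2 a3 a4 a5 f
  have hA5 : 0 ≤ a5 := by rw [ha5def]; positivity
  have hA4 : 0 ≤ a4 := ha4def ▸ cA4 hτ1 hτ2 hδ0 hδ2 hv20
  have hA3 : 0 ≤ a3 := ha3def ▸ cA3 hτ1 hτ2 hδ0 hδ2 hv20
  have hA2 : 0 ≤ a2 := ha2def ▸ cA2 hτ1 hτ2 hδ0 hδ2 hv20
  have hA1 : 0 ≤ a1 := ha1def ▸ cA1 hτ1 hτ2 hδ0 hδ2 hv20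
  have hδv : (8:ℝ) ≤ δ*v^2 := by rw [hv2]; exact hδn
  have hA0 : δ/4*v^5 ≤ a0 := ha0def ▸ cA0 hτ1 hτ2 hδ0 hδ2 hv20 hδv
  have hfn : f ((n:ℝ)) ≤ 16*v^10 := by
    rw [← hv2, hfdef]
    exact cFn hτ1 hτ2 hδ0 hδ2 hv20 hτsq
  have hmaster : ∀ w : Fin n → ℝ, (∀ i, w i = 1 ∨ w i = -1) →
      (∑ S ∈ (Finset.univ : Finset (Fin n)).powersetCard 1, ∏ i ∈ S, w i
          = Ee1 (v^2) (∑ i, w i)) ∧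
      (∑ S ∈ (Finset.univ : Finset (Fin n)).powersetCard 2, ∏ i ∈ S, w i
          = Ee2 (v^2) (∑ i, w i)) ∧
      (∑ S ∈ (Finset.univ : Finset (Fin n)).powersetCard 3, ∏ i ∈ S, w i
          = Ee3 (v^2) (∑ i, w i)) ∧
      (∑ S ∈ (Finset.univ : Finset (Fin n)).powersetCard 4, ∏ i ∈ S, w i
          = Ee4 (v^2) (∑ i, w i)) ∧
      (∑ S ∈ (Finset.univ : Finset (Fin n)).powersetCard 5, ∏ i ∈ S, w i
          = Ee5 (v^2) (∑ i, w i)) := by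
    intro w hw
    have h := master w Finset.univ (fun i _ => hw i)
    rwa [Finset.card_univ, Fintype.card_fin, ← hv2] at h
  have hF1 : 0 ≤ ∑ x ∈ C, ∑ y ∈ C, Ee1 (v^2) (∑ i, uu x i * uu y i) :=
    F_nonneg C 1 _ (fun w hw => (hmaster w hw).1)
  have hF2 : 0 ≤ ∑ x ∈ C, ∑ y ∈ C, Ee2 (v^2) (∑ i, uu x i * uu y i) :=
    F_nonneg C 2 _ (fun w hw => (hmaster w hw).2.1)
  have hF3 : 0 ≤ ∑ x ∈ C, ∑ y ∈ C, Ee3 (v^2) (∑ i, uu x i * uu y i) :=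
    F_nonneg C 3 _ (fun w hw => (hmaster w hw).2.2.1)
  have hF4 : 0 ≤ ∑ x ∈ C, ∑ y ∈ C, Ee4 (v^2) (∑ i, uu x i * uu y i) :=
    F_nonneg C 4 _ (fun w hw => (hmaster w hw).2.2.2.1)
  have hF5 : 0 ≤ ∑ x ∈ C, ∑ y ∈ C, Ee5 (v^2) (∑ i, uu x i * uu y i) :=
    F_nonneg C 5 _ (fun w hw => (hmaster w hw).2.2.2.2)
  have hoff : ∀ x ∈ C, ∀ y ∈ C, x ≠ y → (∑ i, uu x i * uu y i) ≤ 2*τ*v := by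
    intro x hx y hy hxy
    rw [sfun_eq_dist]
    have hdle : (d:ℝ) ≤ (hammingDist x y : ℝ) := by exact_mod_cast hC x hx y hy hxy
    have ht2 : t*v ≤ τ*v := mul_le_mul_of_nonneg_right hτt hv0
    linarith
  have hupper : ∑ x ∈ C, ∑ y ∈ C, f (∑ i, uu x i * uu y i) ≤ (C.card : ℝ) * f ((n:ℝ)) := by
    have hx1 : ∀ x ∈ C, ∑ y ∈ C, f (∑ i, uu x i * uu y i) ≤ f ((n:ℝ)) := by
      intro x hx
      rw [← Finset.add_sum_erase C _ hx, sfun_self]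
      have hsum0 : ∑ y ∈ C.erase x, f (∑ i, uu x i * uu y i) ≤ 0 := by
        apply Finset.sum_nonpos
        intro y hy
        obtain ⟨hyx, hyC⟩ := Finset.mem_erase.mp hy
        have hs := hoff x hx y hyC (Ne.symm hyx)
        rw [hfdef]
        apply mul_nonpos_of_nonpos_of_nonneg
        · linarith
        · exact sq_nonneg _
      linarith
    calc ∑ x ∈ C, ∑ y ∈ C, f (∑ i, uu x i * uu y i) ≤ ∑ _x ∈ C, f ((n:ℝ)) :=
          Finset.sum_le_sum hx1
      _ = (C.card:ℝ) * f ((n:ℝ)) := by rw [Finset.sum_const, nsmul_eq_mul]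
  have hlower : a0 * (C.card:ℝ)^2 ≤ ∑ x ∈ C, ∑ y ∈ C, f (∑ i, uu x i * uu y i) := by
    have hsplit : ∑ x ∈ C, ∑ y ∈ C, f (∑ i, uu x i * uu y i)
        = a0 * (C.card:ℝ)^2
          + a1 * (∑ x ∈ C, ∑ y ∈ C, Ee1 (v^2) (∑ i, uu x i * uu y i))
          + a2 * (∑ x ∈ C, ∑ y ∈ C, Ee2 (v^2) (∑ i, uu x i * uu y i))
          + a3 * (∑ x ∈ C, ∑ y ∈ C, Ee3 (v^2) (∑ i, uu x i * uu y i))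
          + a4 * (∑ x ∈ C, ∑ y ∈ C, Ee4 (v^2) (∑ i, uu x i * uu y i))
          + a5 * (∑ x ∈ C, ∑ y ∈ C, Ee5 (v^2) (∑ i, uu x i * uu y i)) := by
      calc ∑ x ∈ C, ∑ y ∈ C, f (∑ i, uu x i * uu y i)
          = ∑ x ∈ C, ∑ y ∈ C, (a0 + a1 * Ee1 (v^2) (∑ i, uu x i * uu y i)
              + a2 * Ee2 (v^2) (∑ i, uu x i * uu y i)
              + a3 * Ee3 (v^2) (∑ i, uu x i * uu y i)
              + a4 * Ee4 (v^2) (∑ i, uu x i * uu y i)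
              + a5 * Ee5 (v^2) (∑ i, uu x i * uu y i)) :=
            Finset.sum_congr rfl fun x _ => Finset.sum_congr rfl fun y _ => hexp _
        _ = _ := by
            simp only [Finset.sum_add_distrib, ← Finset.mul_sum, Finset.sum_const,
              nsmul_eq_mul]
            ring
    rw [hsplit]
    linarith [mul_nonneg hA1 hF1, mul_nonneg hA2 hF2, mul_nonneg hA3 hF3,
      mul_nonneg hA4 hF4, mul_nonneg hA5 hF5]
  have hkey : a0 * (C.card:ℝ)^2 ≤ (C.card:ℝ) * f ((n:ℝ)) := le_trans hlower hupper
  have hpow : ((n:ℝ))^((5:ℝ)/2) = v^5 := by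
    rw [hvdef, Real.sqrt_eq_rpow, ← Real.rpow_natCast ((n:ℝ)^((1:ℝ)/2)) 5,
      ← Real.rpow_mul (Nat.cast_nonneg n)]
    norm_num
  rw [hpow]
  rcases Nat.eq_zero_or_pos C.card with hc0 | hcpos
  · rw [hc0]
    have h : (0:ℝ) < 256/δ*v^5 := by positivity
    simpa using h.le
  · have hM : (0:ℝ) < (C.card:ℝ) := by exact_mod_cast hcpos
    have hV : (0:ℝ) < v^5 := by positivity
    have h2 : (δ/4)*v^5*(C.card:ℝ)^2 ≤ a0*(C.card:ℝ)^2 :=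
      mul_le_mul_of_nonneg_right hA0 (sq_nonneg _)
    have h3 : (C.card:ℝ)*f ((n:ℝ)) ≤ (C.card:ℝ)*(16*v^10) :=
      mul_le_mul_of_nonneg_left hfn (le_of_lt hM)
    have h4 : (δ/4)*v^5*(C.card:ℝ)^2 ≤ (C.card:ℝ)*(16*v^10) :=
      le_trans (le_trans h2 hkey) h3
    have h4' : (C.card:ℝ)*((δ/4)*v^5*(C.card:ℝ)) ≤ (C.card:ℝ)*(16*v^10) := by
      have e : (C.card:ℝ)*((δ/4)*v^5*(C.card:ℝ)) = (δ/4)*v^5*(C.card:ℝ)^2 := by ring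
      rw [e]; exact h4
    have h1 : (δ/4)*v^5*(C.card:ℝ) ≤ 16*v^10 := le_of_mul_le_mul_left h4' hM
    have h5' : v^5*(δ*(C.card:ℝ)) ≤ v^5*(64*v^5) := by
      have e : v^5*(δ*(C.card:ℝ)) = 4*((δ/4)*v^5*(C.card:ℝ)) := by ring
      have e2 : v^5*(64*v^5) = 4*(16*v^10) := by ring
      rw [e, e2]; linarith
    have h5 : δ*(C.card:ℝ) ≤ 64*v^5 := le_of_mul_le_mul_left h5' hV
    rw [div_mul_eq_mul_div, le_div_iff₀ hδ0]
    linarith [hV.le]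
end
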